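/- Let G be a finite group, N ⊴ G a normal subgroup, and χ an irreducible complex character of G such that the restricted character χ·χ* restricted to N equals χ(1)²·ε_N (i.e., N acts trivially on M ⊗ M* where M affords χ). Then χ|_N = χ(1)·ψ for a linear character ψ of N, and N acts trivially on M^{⊗n} where n is the order of ψ in the group of linear characters of N. -/

import Mathlib

open CategoryTheory Polynomial Matrix


-- sum of re ≤ card for multiset with re ≤ 1
lemma aux_re_sum_le (s : Multiset ℂ) (h : ∀ z ∈ s, z.re ≤ 1) :
    s.sum.re ≤ s.card := by
  induction s using Multiset.induction with
  | empty => simp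
  | cons a s ih =>
    simp only [Multiset.sum_cons, Multiset.card_cons, Complex.add_re]
    have h1 := h a (Multiset.mem_cons_self a s)
    have h2 := ih (fun z hz => h z (Multiset.mem_cons_of_mem hz))
    push_cast
    linarith

lemma aux_re_eq_one (s : Multiset ℂ) (h : ∀ z ∈ s, z.re ≤ 1)
    (hs : s.sum.re = s.card) : ∀ z ∈ s, z.re = 1 := by
  induction s using Multiset.induction with
  | empty => simp
  | cons a s ih =>
    have h1 := h a (Multiset.mem_cons_self a s)
    have h2 := aux_re_sum_le s (fun z hz => h z (Multiset.mem_cons_of_mem hz))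
    simp only [Multiset.sum_cons, Multiset.card_cons, Complex.add_re] at hs
    push_cast at hs
    have ha : a.re = 1 := by linarith
    intro z hz
    rcases Multiset.mem_cons.mp hz with rfl | hz
    · exact ha
    · exact ih (fun w hw => h w (Multiset.mem_cons_of_mem hw)) (by linarith) z hz


lemma aux_eval_charpoly {d : ℕ} (A : Matrix (Fin d) (Fin d) ℂ) (r : ℂ) :
    A.charpoly.eval r = (r • (1 : Matrix (Fin d) (Fin d) ℂ) - A).det := by
  rw [Matrix.charpoly, _root_.eval_det, matPolyEquiv_charmatrix]
  simp [Algebra.algebraMap_eq_smul_one, Matrix.smul_one_eq_diagonal]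

lemma aux_root_pow {d k : ℕ} (A : Matrix (Fin d) (Fin d) ℂ) (hAk : A ^ k = 1)
    {z : ℂ} (hz : z ∈ A.charpoly.roots) : z ^ k = 1 := by
  have hroot : A.charpoly.IsRoot z := isRoot_of_mem_roots hz
  have hdet : (z • (1 : Matrix (Fin d) (Fin d) ℂ) - A).det = 0 := by
    rw [← aux_eval_charpoly]; exact hroot
  obtain ⟨v, hv0, hv⟩ := (Matrix.exists_mulVec_eq_zero_iff).mpr hdet
  have hAv : A *ᵥ v = z • v := by
    rw [Matrix.sub_mulVec, Matrix.smul_mulVec, Matrix.one_mulVec, sub_eq_zero] at hv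
    exact hv.symm
  have hpow : ∀ j : ℕ, (A ^ j) *ᵥ v = z ^ j • v := by
    intro j
    induction j with
    | zero => simp
    | succ j ih =>
      rw [pow_succ, ← Matrix.mulVec_mulVec, hAv, Matrix.mulVec_smul, ih, smul_smul, pow_succ, mul_comm]
  have hfix : z ^ k • v = v := by rw [← hpow, hAk, Matrix.one_mulVec]
  obtain ⟨i, hi⟩ := Function.ne_iff.mp hv0
  have h1 : z ^ k * v i = v i := congrFun hfix i
  have h2 : (z ^ k - 1) * v i = 0 := by linear_combination h1
  rcases mul_eq_zero.mp h2 with h | h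
  · exact sub_eq_zero.mp h
  · exact absurd h (by simpa using hi)

lemma aux_abs_one {k : ℕ} (hk : 0 < k) {z : ℂ} (hz : z ^ k = 1) : ‖z‖ = 1 := by
  have h1 : ‖z‖ ^ k = 1 := by rw [← norm_pow, hz, norm_one]
  rcases pow_eq_one_iff_cases.mp h1 with h | h | h
  · omega
  · exact h
  · nlinarith [norm_nonneg z, h.1]

lemma aux_scalar {d : ℕ} (hd : 0 < d) (A : Matrix (Fin d) (Fin d) ℂ)
    {k : ℕ} (hk : 0 < k) (hAk : A ^ k = 1)
    (htr : ‖A.trace‖ = d) :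
    A = algebraMap ℂ (Matrix (Fin d) (Fin d) ℂ) (A.trace / d) := by
  set t := A.trace with ht
  set μ : ℂ := t / d with hμ
  have hd' : (d : ℂ) ≠ 0 := Nat.cast_ne_zero.mpr hd.ne'
  have habsμ : ‖μ‖ = 1 := by
    rw [hμ, norm_div, htr]
    simp [hd.ne']
  set c : ℂ := (starRingEnd ℂ) μ with hc
  have habsc : ‖c‖ = 1 := by rw [hc, Complex.norm_conj]; exact habsμ
  have hcμ : c * μ = 1 := by
    rw [hc, mul_comm, Complex.mul_conj, Complex.normSq_eq_norm_sq, habsμ]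
    norm_num
  have hsplit : A.charpoly.Splits := IsAlgClosed.splits _
  have hdeg : A.charpoly.natDegree = d := by simpa using A.charpoly_natDegree_eq_dim
  have hcard : A.charpoly.roots.card = d := by
    rw [(Polynomial.splits_iff_card_roots).mp hsplit, hdeg]
  have hsum : A.charpoly.roots.sum = t := (A.trace_eq_sum_roots_charpoly).symm
  have habs : ∀ z ∈ A.charpoly.roots, ‖z‖ = 1 := fun z hz =>
    aux_abs_one hk (aux_root_pow A hAk hz)
  have hre : ∀ z ∈ A.charpoly.roots, ((c * z).re) ≤ 1 := by
    intro z hz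
    calc (c * z).re ≤ ‖c * z‖ := Complex.re_le_norm _
    _ = 1 := by rw [norm_mul, habsc, habs z hz, one_mul]
  have hct : (c * t).re = (d : ℝ) := by
    have h : c * t = (d : ℂ) := by
      rw [hc, hμ, map_div₀, Complex.conj_natCast, div_mul_eq_mul_div, mul_comm,
        Complex.mul_conj, Complex.normSq_eq_norm_sq, htr]
      push_cast
      field_simp
    rw [h, Complex.natCast_re]
  have hmap : ∀ w ∈ A.charpoly.roots.map (fun z => c * z), w = 1 := by
    intro w hw
    have hre' : ∀ w ∈ A.charpoly.roots.map (fun z => c * z), w.re ≤ 1 := by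
      intro w hw
      obtain ⟨z, hz, rfl⟩ := Multiset.mem_map.mp hw
      exact hre z hz
    have hsum' : (A.charpoly.roots.map (fun z => c * z)).sum.re =
        (A.charpoly.roots.map (fun z => c * z)).card := by
      rw [Multiset.sum_map_mul_left, Multiset.card_map, hcard]
      simp only [Multiset.map_id']
      rw [hsum, hct]
    have h1 := aux_re_eq_one _ hre' hsum' w hw
    obtain ⟨z, hz, rfl⟩ := Multiset.mem_map.mp hw
    have habsw : ‖c * z‖ = 1 := by rw [norm_mul, habsc, habs z hz, one_mul]
    have h2 : (c * z).im = 0 := by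
      have h3 := Complex.sq_norm (c * z)
      rw [habsw] at h3
      have hn : Complex.normSq (c * z) = (c*z).re^2 + (c*z).im^2 := by
        rw [Complex.normSq_apply]; ring
      nlinarith [h1]
    exact Complex.ext (by simpa using h1) (by simpa using h2)
  have hroots : ∀ z ∈ A.charpoly.roots, z = μ := by
    intro z hz
    have h1 : c * z = 1 := hmap _ (Multiset.mem_map_of_mem _ hz)
    have hc0 : c ≠ 0 := by
      intro h; rw [h] at habsc; simp at habsc
    exact mul_left_cancel₀ hc0 (by rw [h1, hcμ])
  have hcp : A.charpoly = (X - C μ) ^ d := by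
    rw [hsplit.eq_prod_roots_of_monic A.charpoly_monic]
    have h : A.charpoly.roots.map (fun a => X - C a) = Multiset.replicate d (X - C μ) := by
      rw [Multiset.eq_replicate]
      refine ⟨by rw [Multiset.card_map, hcard], ?_⟩
      intro b hb
      obtain ⟨a, ha, rfl⟩ := Multiset.mem_map.mp hb
      rw [hroots a ha]
    rw [h, Multiset.prod_replicate]
  have hnil : (A - algebraMap ℂ _ μ) ^ d = 0 := by
    have h := A.aeval_self_charpoly
    rw [hcp] at h
    simpa [map_pow, map_sub, aeval_X, aeval_C] using h
  let e : Matrix (Fin d) (Fin d) ℂ ≃ₐ[ℂ] Module.End ℂ (Fin d → ℂ) :=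
    Matrix.toLinAlgEquiv' (R := ℂ) (n := Fin d)
  have hsq : Squarefree ((X : ℂ[X]) ^ k - 1) := by
    rw [← C_1]
    exact (Polynomial.X_pow_sub_one_separable_iff.mpr
      (by exact_mod_cast Nat.cast_ne_zero.mpr hk.ne' : (k : ℂ) ≠ 0)).squarefree
  have hg : aeval (e A) ((X : ℂ[X]) ^ k - 1) = 0 := by
    rw [show (e A) = e.toAlgHom A from rfl, Polynomial.aeval_algHom_apply]
    have h : (aeval A) ((X : ℂ[X]) ^ k - 1) = 0 := by
      rw [map_sub, map_pow, aeval_X, _root_.map_one, hAk, sub_self]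
    rw [h, map_zero]
  have hss : (e A).IsSemisimple :=
    Module.End.isSemisimple_of_squarefree_aeval_eq_zero hsq hg
  have hssB : (e A - algebraMap ℂ _ μ).IsSemisimple :=
    Module.End.isSemisimple_sub_algebraMap_iff.mpr hss
  have heB : e A - algebraMap ℂ _ μ = e (A - algebraMap ℂ _ μ) := by
    rw [map_sub, AlgEquiv.commutes]
  have hnilB : IsNilpotent (e A - algebraMap ℂ _ μ) := by
    refine ⟨d, ?_⟩
    rw [heB, ← map_pow, hnil, map_zero]
  have hzero := Module.End.eq_zero_of_isNilpotent_isSemisimple hnilB hssB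
  rw [heB] at hzero
  have h := e.injective (by rw [hzero, map_zero] : e (A - algebraMap ℂ _ μ) = e 0)
  rw [sub_eq_zero] at h
  exact h

theorem stmt11 {G : Type} [Group G] [Fintype G] (N : Subgroup G) (hN : N.Normal)
    (V : FDRep ℂ G) [Simple V]
    (htriv : ∀ m ∈ N, V.character m * star (V.character m) = (V.character 1) ^ 2) :
    ∃ ψ : ↥N →* ℂˣ,
      (∀ (m : G) (hm : m ∈ N), V.character m = V.character 1 * (ψ ⟨m, hm⟩ : ℂ)) ∧
      ∀ m ∈ N, (V.character m) ^ (orderOf ψ) = (V.character 1) ^ (orderOf ψ) := by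
  classical
  set dn := Module.finrank ℂ V with hdn
  have hchi1 : V.character 1 = (dn : ℂ) := by simp [hdn]
  have hnormSq : ∀ m ∈ N, Complex.normSq (V.character m) = (dn : ℝ) ^ 2 := by
    intro m hm
    have h := htriv m hm
    rw [hchi1, Complex.star_def, Complex.mul_conj] at h
    have : ((Complex.normSq (V.character m) : ℝ) : ℂ) = (((dn : ℝ) ^ 2 : ℝ) : ℂ) := by
      rw [h]; push_cast; ring
    exact_mod_cast this
  by_cases hd0 : dn = 0
  · -- degenerate case
    refine ⟨1, ?_, ?_⟩
    · intro m hm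
      have h := hnormSq m hm
      rw [hd0] at h
      simp only [Nat.cast_zero] at h
      have hm0 : V.character m = 0 := by
        have := Complex.normSq_eq_zero.mp (by simpa using h)
        exact this
      rw [hm0, hchi1, hd0]
      simp
    · intro m hm
      have h := hnormSq m hm
      rw [hd0] at h
      have hm0 : V.character m = 0 := Complex.normSq_eq_zero.mp (by simpa using h)
      rw [hm0, hchi1, hd0]
      norm_num
  · have hd : 0 < dn := Nat.pos_of_ne_zero hd0
    have hdC : (dn : ℂ) ≠ 0 := Nat.cast_ne_zero.mpr hd0
    have habs : ∀ m ∈ N, ‖V.character m‖ = (dn : ℝ) := by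
      intro m hm
      have h := hnormSq m hm
      rw [Complex.norm_def, h]
      exact Real.sqrt_sq (by positivity)
    -- scalar action
    have hscal : ∀ m ∈ N, V.ρ m = algebraMap ℂ (Module.End ℂ V) (V.character m / dn) := by
      intro m hm
      let b := Module.finBasis ℂ V
      let E := LinearMap.toMatrixAlgEquiv b
      have htr : (E (V.ρ m)).trace = V.character m :=
        (LinearMap.trace_eq_matrix_trace ℂ b (V.ρ m)).symm
      have hAk : (E (V.ρ m)) ^ (orderOf m) = 1 := by
        rw [← map_pow, ← map_pow, pow_orderOf_eq_one, _root_.map_one, _root_.map_one]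
      have h := aux_scalar hd (E (V.ρ m)) (orderOf_pos m) hAk
        (by rw [htr]; exact habs m hm)
      rw [htr] at h
      have h2 : V.ρ m = E.symm (algebraMap ℂ _ (V.character m / dn)) := by
        rw [← h, AlgEquiv.symm_apply_apply]
      rw [h2, AlgEquiv.commutes]
    -- nonzero vector
    have : Nontrivial V := Module.finrank_pos_iff.mp (hdn ▸ hd)
    obtain ⟨v, hv⟩ := exists_ne (0 : V)
    have hinj : Function.Injective (algebraMap ℂ (Module.End ℂ V)) := by
      intro x y hxy
      have hx : x • v = y • v := by
        simpa [Module.algebraMap_end_apply] using LinearMap.congr_fun hxy v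
      exact smul_left_injective ℂ hv hx
    have hne : ∀ m : ↥N, V.character ↑m / (dn : ℂ) ≠ 0 := by
      intro m
      have h1 : V.character ↑m ≠ 0 := by
        intro h
        have h2 := habs ↑m m.2
        rw [h, norm_zero] at h2
        exact hd0 (by exact_mod_cast h2.symm)
      exact div_ne_zero h1 hdC
    set ψ : ↥N →* ℂˣ := MonoidHom.mk'
      (fun n => Units.mk0 (V.character ↑n / dn) (hne n))
      (by
        intro a b
        ext
        simp only [Units.val_mk0, Units.val_mul]
        apply hinj
        rw [_root_.map_mul]
        rw [Subgroup.coe_mul, ← hscal _ (mul_mem a.2 b.2), ← hscal _ a.2, ← hscal _ b.2,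
          _root_.map_mul]) with hψ
    have hval : ∀ (m : G) (hm : m ∈ N), ((ψ ⟨m, hm⟩ : ℂˣ) : ℂ) = V.character m / dn := by
      intro m hm; rfl
    have hclaim1 : ∀ (m : G) (hm : m ∈ N),
        V.character m = V.character 1 * ((ψ ⟨m, hm⟩ : ℂˣ) : ℂ) := by
      intro m hm
      rw [hval, hchi1, mul_div_cancel₀ _ hdC]
    refine ⟨ψ, hclaim1, ?_⟩
    intro m hm
    rw [hclaim1 m hm, mul_pow]
    have : ((ψ ⟨m, hm⟩ : ℂˣ) : ℂ) ^ (orderOf ψ) = 1 := by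
      rw [← Units.val_pow_eq_pow_val, ← MonoidHom.pow_apply, pow_orderOf_eq_one]
      rfl
    rw [this, mul_one]
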